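/- arXiv:2306.16889 — 2 statements merged into one kernel-verified Lean document; each statement's English description precedes it below -/
import Mathlib

section
/- ∑_{k=1}^∞ (8/3)^k / (k · C(3k,k)) = (2√3·π)/7 − (2/7)·log 3. -/
open Real MeasureTheory intervalIntegral Set

private lemma beta_nat (a b : ℕ) : ∫ t in (0:ℝ)..1, t^a * (1-t)^b =
    (a.factorial * b.factorial : ℝ) / ((a+b+1).factorial) := by
  have h := Complex.Gamma_mul_Gamma_eq_betaIntegral
    (s := ((a:ℂ)+1)) (t := ((b:ℂ)+1)) (by simp; positivity) (by simp; positivity)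
  have hga : Complex.Gamma ((a:ℂ)+1) = a.factorial := Complex.Gamma_nat_eq_factorial a
  have hgb : Complex.Gamma ((b:ℂ)+1) = b.factorial := Complex.Gamma_nat_eq_factorial b
  have hgab : Complex.Gamma ((a:ℂ)+1+((b:ℂ)+1)) = (a+b+1).factorial := by
    have : ((a:ℂ)+1+((b:ℂ)+1)) = (((a+b+1 : ℕ)):ℂ) + 1 := by push_cast; ring
    rw [this, Complex.Gamma_nat_eq_factorial]
  have hbeta : Complex.betaIntegral ((a:ℂ)+1) ((b:ℂ)+1) =
      ((∫ t in (0:ℝ)..1, t^a * (1-t)^b : ℝ) : ℂ) := by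
    rw [Complex.betaIntegral]
    rw [← intervalIntegral.integral_ofReal]
    apply intervalIntegral.integral_congr
    intro x _
    push_cast
    rw [add_sub_cancel_right, add_sub_cancel_right, Complex.cpow_natCast, Complex.cpow_natCast]
  rw [hga, hgb, hgab, hbeta] at h
  have hne : ((a+b+1).factorial : ℂ) ≠ 0 := Nat.cast_ne_zero.2 (Nat.factorial_ne_zero _)
  field_simp
  rw [mul_comm]
  exact_mod_cast h.symm

private lemma term_eq (k : ℕ) :
    ∫ t in Ioc (0:ℝ) 1, (8/3:ℝ)^(k+1) * (t^k * (1-t)^(2*k+2)) =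
    (8/3 : ℝ)^(k+1) / ((((k:ℝ)+1)) * (((3*(k+1)).choose (k+1) : ℕ) : ℝ)) := by
  rw [← intervalIntegral.integral_of_le (by norm_num : (0:ℝ) ≤ 1),
    intervalIntegral.integral_const_mul, beta_nat]
  have h1 : (3*(k+1)).choose (k+1) * (k+1).factorial * (2*k+2).factorial
      = (k + (2*k+2) + 1).factorial := by
    have := Nat.choose_mul_factorial_mul_factorial (show k+1 ≤ 3*(k+1) by omega)
    have h2 : 3*(k+1) - (k+1) = 2*k+2 := by omega
    rw [h2] at this
    rw [this]; congr 1; omega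
  have hc : (0:ℝ) < ((3*(k+1)).choose (k+1) : ℝ) := by
    exact_mod_cast Nat.choose_pos (by omega)
  have hfk : ((k+1).factorial : ℝ) = (k+1) * k.factorial := by
    rw [Nat.factorial_succ]; push_cast; ring
  have h1' : (((3*(k+1)).choose (k+1) : ℝ)) * ((k+1) * k.factorial) * ((2*k+2).factorial : ℝ)
      = ((k + (2*k+2) + 1).factorial : ℝ) := by
    rw [← hfk]; exact_mod_cast congrArg (Nat.cast : ℕ → ℝ) h1
  rw [← h1']
  have h3 : (0:ℝ) < k.factorial := by exact_mod_cast k.factorial_pos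
  have h4 : (0:ℝ) < (2*k+2).factorial := by exact_mod_cast (2*k+2).factorial_pos
  field_simp

private lemma geo_eq {t : ℝ} (ht : t ∈ Ioc (0:ℝ) 1) :
    ∑' k : ℕ, (8/3:ℝ)^(k+1) * (t^k * (1-t)^(2*k+2)) =
    8*(1-t)^2 / ((3-2*t)*(4*t^2-2*t+1)) := by
  obtain ⟨ht0, ht1⟩ := ht
  set r : ℝ := (8/3) * (t*(1-t)^2) with hrdef
  have hr0 : 0 ≤ r := by
    have : 0 ≤ (1-t)^2 := sq_nonneg _
    positivity
  have hr1 : r < 1 := by nlinarith [sq_nonneg (3*t-1), sq_nonneg (1-t)]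
  have hterm : ∀ k : ℕ, (8/3:ℝ)^(k+1) * (t^k * (1-t)^(2*k+2)) = ((8/3)*(1-t)^2) * r^k := by
    intro k
    rw [hrdef, mul_pow, mul_pow, pow_succ, ← pow_mul]
    ring_nf
  rw [tsum_congr hterm, tsum_mul_left, tsum_geometric_of_lt_one hr0 hr1]
  have hden : (3-2*t)*(4*t^2-2*t+1) = 3*(1-r) := by rw [hrdef]; ring
  have h1r : (0:ℝ) < 1 - r := by linarith
  rw [hden]
  field_simp

private noncomputable def FF (t : ℝ) : ℝ :=
  -(1/7)*Real.log (3-2*t) - (3/7)*Real.log (4*t^2-2*t+1)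
    + (12/(7*Real.sqrt 3))*Real.arctan ((4*t-1)/Real.sqrt 3)

private lemma quad_pos (t : ℝ) : (0:ℝ) < 4*t^2-2*t+1 := by nlinarith [sq_nonneg (2*t-1)]

private lemma arctan_term (t : ℝ) :
    12/(7*Real.sqrt 3) * (1/(1+((4*t-1)/Real.sqrt 3)^2) * (4/Real.sqrt 3))
      = (12/7) * (4*t^2-2*t+1)⁻¹ := by
  have hq := quad_pos t
  have hs : (0:ℝ) < Real.sqrt 3 := Real.sqrt_pos.mpr (by norm_num)
  have hss : Real.sqrt 3 ^ 2 = 3 := Real.sq_sqrt (by norm_num)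
  have hu : 1+((4*t-1)/Real.sqrt 3)^2 = (4*(4*t^2-2*t+1))/3 := by
    rw [div_pow, hss]; field_simp; ring
  rw [hu]
  field_simp
  rw [hss]

private lemma FF_deriv {t : ℝ} (ht : t ∈ Icc (0:ℝ) 1) :
    HasDerivAt FF (8*(1-t)^2 / ((3-2*t)*(4*t^2-2*t+1))) t := by
  obtain ⟨ht0, ht1⟩ := ht
  have hlin : (0:ℝ) < 3-2*t := by linarith
  have hq := quad_pos t
  have h1 : HasDerivAt (fun t : ℝ => Real.log (3-2*t)) ((3-2*t)⁻¹ * (-2)) t := by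
    have inner : HasDerivAt (fun t : ℝ => 3-2*t) (-2) t := by
      simpa using ((hasDerivAt_id t).const_mul (2:ℝ)).const_sub 3
    simpa [Function.comp_def] using (Real.hasDerivAt_log hlin.ne').comp t inner
  have h2 : HasDerivAt (fun t : ℝ => Real.log (4*t^2-2*t+1))
      ((4*t^2-2*t+1)⁻¹ * (8*t-2)) t := by
    have inner : HasDerivAt (fun t : ℝ => 4*t^2-2*t+1) (8*t-2) t := by
      have h := (((hasDerivAt_pow 2 t).const_mul (4:ℝ)).sub
        ((hasDerivAt_id t).const_mul 2)).add_const 1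
      exact h.congr_deriv (by norm_num; ring)
    simpa [Function.comp_def] using (Real.hasDerivAt_log hq.ne').comp t inner
  have h3 : HasDerivAt (fun t : ℝ => Real.arctan ((4*t-1)/Real.sqrt 3))
      (1/(1+((4*t-1)/Real.sqrt 3)^2) * (4/Real.sqrt 3)) t := by
    have hs : (0:ℝ) < Real.sqrt 3 := Real.sqrt_pos.mpr (by norm_num)
    have inner : HasDerivAt (fun t : ℝ => (4*t-1)/Real.sqrt 3) (4/Real.sqrt 3) t := by
      have h : HasDerivAt (fun t : ℝ => 4*t-1) 4 t := by
        simpa using ((hasDerivAt_id t).const_mul (4:ℝ)).sub_const 1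
      simpa [div_eq_mul_inv] using h.mul_const (Real.sqrt 3)⁻¹
    exact (Real.hasDerivAt_arctan _).comp t inner
  have hF : HasDerivAt FF
      (-(1/7)*((3-2*t)⁻¹ * (-2)) - (3/7)*((4*t^2-2*t+1)⁻¹ * (8*t-2))
        + (12/(7*Real.sqrt 3))*(1/(1+((4*t-1)/Real.sqrt 3)^2) * (4/Real.sqrt 3))) t :=
    ((h1.const_mul (-(1/7))).sub (h2.const_mul (3/7))).add (h3.const_mul _)
  convert hF using 1
  rw [arctan_term]
  rw [div_eq_iff (mul_pos hlin hq).ne']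
  linear_combination (-(2/7)*(4*t^2-2*t+1)) * inv_mul_cancel₀ hlin.ne' + ((3/7)*(8*t-2) - 12/7)*(3-2*t) * inv_mul_cancel₀ hq.ne'

private lemma arctan_sqrt3 : Real.arctan (Real.sqrt 3) = π/3 := by
  rw [← Real.tan_pi_div_three]
  exact Real.arctan_tan (by linarith [Real.pi_pos]) (by linarith [Real.pi_pos])

private lemma arctan_inv_sqrt3 : Real.arctan (1/Real.sqrt 3) = π/6 := by
  rw [← Real.tan_pi_div_six]
  exact Real.arctan_tan (by linarith [Real.pi_pos]) (by linarith [Real.pi_pos])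

private lemma ftc_result :
    ∫ t in Ioc (0:ℝ) 1, 8*(1-t)^2 / ((3-2*t)*(4*t^2-2*t+1)) =
    (2*Real.sqrt 3*π)/7 - (2/7)*Real.log 3 := by
  rw [← intervalIntegral.integral_of_le (by norm_num : (0:ℝ) ≤ 1)]
  have hicc : uIcc (0:ℝ) 1 = Icc 0 1 := uIcc_of_le (by norm_num)
  have hderiv : ∀ t ∈ uIcc (0:ℝ) 1,
      HasDerivAt FF (8*(1-t)^2 / ((3-2*t)*(4*t^2-2*t+1))) t := by
    rw [hicc]; exact fun t ht => FF_deriv ht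
  have hint : IntervalIntegrable (fun t => 8*(1-t)^2 / ((3-2*t)*(4*t^2-2*t+1)))
      volume 0 1 := by
    apply ContinuousOn.intervalIntegrable
    apply ContinuousOn.div
    · fun_prop
    · fun_prop
    · intro t ht
      rw [hicc] at ht
      have hlin : (0:ℝ) < 3-2*t := by linarith [ht.2]
      have hq := quad_pos t
      positivity
  rw [intervalIntegral.integral_eq_sub_of_hasDerivAt hderiv hint]
  have hs : (0:ℝ) < Real.sqrt 3 := Real.sqrt_pos.mpr (by norm_num)
  have hss : Real.sqrt 3 ^ 2 = 3 := Real.sq_sqrt (by norm_num)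
  have e1 : (4*(1:ℝ)-1)/Real.sqrt 3 = Real.sqrt 3 := by
    rw [div_eq_iff hs.ne']
    nlinarith [hss]
  have e0 : (4*(0:ℝ)-1)/Real.sqrt 3 = -(1/Real.sqrt 3) := by ring
  rw [FF, FF, e1, e0, Real.arctan_neg, arctan_sqrt3, arctan_inv_sqrt3]
  norm_num [Real.log_one]
  field_simp
  ring_nf
  linear_combination (-(36 * π)) * hss

theorem stmt_4 :
    ∑' k : ℕ, (8/3 : ℝ)^(k+1) / ((((k:ℝ)+1)) * (((3*(k+1)).choose (k+1) : ℕ) : ℝ)) =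
    (2*Real.sqrt 3*π)/7 - (2/7)*Real.log 3 := by
  set F : ℕ → ℝ → ℝ := fun k t => (8/3:ℝ)^(k+1) * (t^k * (1-t)^(2*k+2)) with hF
  have hcont : ∀ k, Continuous (F k) := by intro k; rw [hF]; fun_prop
  have hint : ∀ k : ℕ, Integrable (F k) (volume.restrict (Ioc (0:ℝ) 1)) := fun k =>
    (hcont k).integrableOn_Ioc
  have hbound : ∀ k : ℕ, ∀ t ∈ Ioc (0:ℝ) 1, ‖F k t‖ ≤ (8/3) * (32/81)^k := by
    intro k t ⟨ht0, ht1⟩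
    rw [hF]
    have h1 : (0:ℝ) ≤ (8/3:ℝ)^(k+1) * (t^k * (1-t)^(2*k+2)) :=
      mul_nonneg (by positivity)
        (mul_nonneg (pow_nonneg ht0.le k) (pow_nonneg (by linarith) _))
    rw [Real.norm_of_nonneg h1]
    have key : (8/3:ℝ)^(k+1) * (t^k * (1-t)^(2*k+2))
        = (8/3) * ((8/3)*(t*(1-t)^2))^k * (1-t)^2 := by
      rw [mul_pow, mul_pow, pow_succ, ← pow_mul]; ring
    rw [key]
    have hr0 : (0:ℝ) ≤ (8/3)*(t*(1-t)^2) := by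
      have : (0:ℝ) ≤ (1-t)^2 := sq_nonneg _
      positivity
    have hr : (8/3:ℝ)*(t*(1-t)^2) ≤ 32/81 := by
      nlinarith [sq_nonneg (3*t-1), sq_nonneg (1-t)]
    have h2 : ((8/3:ℝ)*(t*(1-t)^2))^k ≤ (32/81)^k := pow_le_pow_left₀ hr0 hr k
    have h3 : (1-t)^2 ≤ 1 := by nlinarith
    have h4 : (0:ℝ) ≤ ((8/3:ℝ)*(t*(1-t)^2))^k := pow_nonneg hr0 k
    nlinarith [pow_nonneg (show (0:ℝ) ≤ 32/81 by norm_num) k]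
  have hsum : Summable fun k : ℕ => ∫ t, ‖F k t‖ ∂(volume.restrict (Ioc (0:ℝ) 1)) := by
    apply Summable.of_nonneg_of_le
      (fun k => integral_nonneg fun t => norm_nonneg _)
      (fun k => ?_)
      (((summable_geometric_of_lt_one (by norm_num) (by norm_num : (32/81:ℝ) < 1))).mul_left (8/3))
    calc ∫ t, ‖F k t‖ ∂(volume.restrict (Ioc (0:ℝ) 1))
        ≤ ∫ t in Ioc (0:ℝ) 1, (8/3) * (32/81)^k := by
          apply setIntegral_mono_on (hint k).norm (integrableOn_const ?_)
            measurableSet_Ioc (hbound k)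
          simp [Real.volume_Ioc]
      _ = (8/3) * (32/81)^k := by
          rw [setIntegral_const]
          simp [Real.volume_Ioc]
  have hswap := MeasureTheory.integral_tsum_of_summable_integral_norm hint hsum
  have hlhs : ∀ k : ℕ, ∫ t, F k t ∂(volume.restrict (Ioc (0:ℝ) 1)) =
      (8/3 : ℝ)^(k+1) / ((((k:ℝ)+1)) * (((3*(k+1)).choose (k+1) : ℕ) : ℝ)) := fun k =>
    term_eq k
  calc ∑' k : ℕ, (8/3 : ℝ)^(k+1) / ((((k:ℝ)+1)) * (((3*(k+1)).choose (k+1) : ℕ) : ℝ))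
      = ∑' k : ℕ, ∫ t, F k t ∂(volume.restrict (Ioc (0:ℝ) 1)) := by
        exact (tsum_congr hlhs).symm
    _ = ∫ t, (∑' k : ℕ, F k t) ∂(volume.restrict (Ioc (0:ℝ) 1)) := hswap
    _ = ∫ t in Ioc (0:ℝ) 1, 8*(1-t)^2 / ((3-2*t)*(4*t^2-2*t+1)) := by
        apply setIntegral_congr_fun measurableSet_Ioc
        intro t ht
        exact geo_eq ht
    _ = (2*Real.sqrt 3*π)/7 - (2/7)*Real.log 3 := ftc_result
end

section
/- ∑_{k=1}^∞ (729/784)^k / (k · C(3k,k)) = (12√3/13)·arctan(√3/5) − (3/13)·log(16/7). -/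
open Real


open Real MeasureTheory intervalIntegral Finset

lemma prodfact (n : ℕ) (hn : 1 ≤ n) (m : ℕ) :
    Nat.factorial (n-1) * ∏ j ∈ Finset.range m, (n+j) = Nat.factorial (n - 1 + m) := by
  induction m with
  | zero => simp
  | succ m ih =>
      rw [Finset.prod_range_succ, ← mul_assoc, ih]
      have h : n - 1 + (m+1) = (n-1+m) + 1 := by omega
      rw [h, Nat.factorial_succ]
      have h2 : n + m = n - 1 + m + 1 := by omega
      rw [h2, mul_comm]

lemma beta_step (n : ℕ) (hn : 1 ≤ n) :
    ∫ t in (0:ℝ)..1, t^(n-1) * (1-t)^(2*n) = 1 / (n * ((3*n).choose n)) := by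
  have hre : 0 < Complex.re ((n:ℕ):ℂ) := by
    simp only [Complex.natCast_re]
    exact_mod_cast hn
  have h1 := Complex.betaIntegral_eval_nat_add_one_right hre (2*n)
  have h2 : Complex.betaIntegral ((n:ℕ):ℂ) ((2*n : ℕ) + 1)
      = ((∫ t in (0:ℝ)..1, t^(n-1) * (1-t)^(2*n) : ℝ) : ℂ) := by
    rw [Complex.betaIntegral, ← intervalIntegral.integral_ofReal]
    apply intervalIntegral.integral_congr
    intro x _
    have e1 : ((n:ℕ):ℂ) - 1 = ((n - 1 : ℕ) : ℂ) := by
      push_cast [Nat.cast_sub hn]; ring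
    have e2 : ((2*n : ℕ):ℂ) + 1 - 1 = ((2*n : ℕ) : ℂ) := by ring
    show (x:ℂ) ^ (((n:ℕ):ℂ)-1) * (1-(x:ℂ)) ^ (((2*n:ℕ):ℂ)+1-1) = _
    rw [e1, e2, Complex.cpow_natCast, Complex.cpow_natCast]
    push_cast
    ring
  have h3 : ∏ j ∈ Finset.range (2*n+1), (((n:ℕ):ℂ) + j)
      = (Nat.factorial (3*n) : ℂ) / (Nat.factorial (n-1) : ℂ) := by
    have hp := prodfact n hn (2*n+1)
    have heq : n - 1 + (2*n+1) = 3*n := by omega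
    rw [heq] at hp
    have h31 : (Nat.factorial (n-1) : ℂ) * ∏ j ∈ Finset.range (2*n+1), (((n:ℕ):ℂ) + j)
        = (Nat.factorial (3*n) : ℂ) := by exact_mod_cast hp
    rw [eq_div_iff (by exact_mod_cast Nat.factorial_ne_zero (n-1))]
    linear_combination h31
  rw [h2, h3] at h1
  have h4 : (∫ t in (0:ℝ)..1, t^(n-1) * (1-t)^(2*n))
      = (Nat.factorial (2*n) : ℝ) * (Nat.factorial (n-1) : ℝ) / (Nat.factorial (3*n) : ℝ) := by
    rw [div_div_eq_mul_div] at h1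
    apply Complex.ofReal_injective
    push_cast
    exact h1
  rw [h4]
  have hkey : ((3*n).choose n) * (Nat.factorial n) * Nat.factorial (2*n) = Nat.factorial (3*n) := by
    have := Nat.choose_mul_factorial_mul_factorial (show n ≤ 3*n by omega)
    rwa [show 3*n - n = 2*n by omega] at this
  have hn' : Nat.factorial n = n * Nat.factorial (n-1) := by
    conv_lhs => rw [show n = (n-1)+1 by omega]
    rw [Nat.factorial_succ]
    congr 2; omega
  rw [hn'] at hkey
  have hcp : 0 < (3*n).choose n := Nat.choose_pos (show n ≤ 3*n by omega)
  have hkeyR : (((3*n).choose n : ℝ)) * ((n:ℝ) * Nat.factorial (n-1)) * Nat.factorial (2*n)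
      = Nat.factorial (3*n) := by exact_mod_cast hkey
  rw [eq_div_iff (by positivity)]
  have hf : (Nat.factorial (3*n) : ℝ) ≠ 0 := by positivity
  field_simp
  nlinarith [hkeyR]


open Real MeasureTheory intervalIntegral

noncomputable def Faux (t : ℝ) : ℝ :=
  (-(7/39)) * Real.log (16 - 9*t) + (-(16/39)) * Real.log (81*t^2 - 18*t + 49)
    + (4*Real.sqrt 3/13) * Real.arctan ((9*t-1)/(4*Real.sqrt 3))

lemma ftc_step :
    ∫ t in (0:ℝ)..1, (729/784)*(1-t)^2 * (1 - (729/784)*(t*(1-t)^2))⁻¹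
      = (12*Real.sqrt 3/13)*Real.arctan (Real.sqrt 3/5) - (3/13)*Real.log (16/7) := by
  set s := Real.sqrt 3 with hsdef
  have hs : s^2 = 3 := Real.sq_sqrt (by norm_num)
  have hs0 : 0 < s := Real.sqrt_pos.mpr (by norm_num)
  have hderiv : ∀ t ∈ Set.uIcc (0:ℝ) 1,
      HasDerivAt Faux ((729/784)*(1-t)^2 * (1 - (729/784)*(t*(1-t)^2))⁻¹) t := by
    intro t ht
    rw [Set.uIcc_of_le (by norm_num : (0:ℝ) ≤ 1)] at ht
    obtain ⟨ht0, ht1⟩ := ht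
    have hden1 : (0:ℝ) < 16 - 9*t := by nlinarith
    have hden2 : (0:ℝ) < 81*t^2 - 18*t + 49 := by nlinarith [sq_nonneg (9*t-1)]
    have hden3 : (0:ℝ) < 1 - (729/784)*(t*(1-t)^2) := by
      nlinarith [sq_nonneg (1-3*t), mul_nonneg (mul_nonneg (sq_nonneg (1-3*t)) ht0) (by nlinarith : (0:ℝ) ≤ 4 - 3*t)]
    have h1 : HasDerivAt (fun u : ℝ => 16 - 9*u) (-9) t := by
      simpa using ((hasDerivAt_id t).const_mul (9:ℝ)).const_sub 16
    have hl1 : HasDerivAt (fun u : ℝ => Real.log (16 - 9*u)) (-9 / (16 - 9*t)) t :=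
      h1.log (by linarith)
    have h2 : HasDerivAt (fun u : ℝ => 81*u^2 - 18*u + 49) (162*t - 18) t := by
      have := (((hasDerivAt_pow 2 t).const_mul (81:ℝ)).sub
        ((hasDerivAt_id t).const_mul (18:ℝ))).add_const 49
      refine this.congr_deriv ?_
      push_cast; ring
    have hl2 : HasDerivAt (fun u : ℝ => Real.log (81*u^2 - 18*u + 49))
        ((162*t - 18) / (81*t^2 - 18*t + 49)) t := h2.log (by linarith)
    have h3 : HasDerivAt (fun u : ℝ => (9*u-1)/(4*s)) (9/(4*s)) t := by
      have := (((hasDerivAt_id t).const_mul (9:ℝ)).sub_const 1).div_const (4*s)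
      refine this.congr_deriv ?_
      ring
    have ha : HasDerivAt (fun u : ℝ => Real.arctan ((9*u-1)/(4*s)))
        (1 / (1 + ((9*t-1)/(4*s))^2) * (9/(4*s))) t := h3.arctan
    have hF := ((hl1.const_mul (-(7/39) : ℝ)).add (hl2.const_mul (-(16/39) : ℝ))).add
      (ha.const_mul (4*s/13))
    refine hF.congr_deriv (Eq.symm ?_)
    have hsq : ((9*t-1)/(4*s))^2 = (9*t-1)^2/48 := by
      rw [div_pow, mul_pow, hs]; norm_num
    rw [hsq]
    have h48 : (0:ℝ) < 1 + (9*t-1)^2/48 := by positivity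
    rw [← div_eq_mul_inv, div_eq_iff hden3.ne']
    have hd1' : 16 - t*9 ≠ 0 := by intro h; linarith
    have hd2' : t*(t*81-18)+49 ≠ 0 := by intro h; nlinarith
    field_simp
    field_simp
    ring
  have hcont : IntervalIntegrable
      (fun t : ℝ => (729/784)*(1-t)^2 * (1 - (729/784)*(t*(1-t)^2))⁻¹) volume 0 1 := by
    apply ContinuousOn.intervalIntegrable
    apply ContinuousOn.mul
    · fun_prop
    · apply ContinuousOn.inv₀
      · fun_prop
      · intro t ht
        rw [Set.uIcc_of_le (by norm_num : (0:ℝ) ≤ 1)] at ht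
        obtain ⟨ht0, ht1⟩ := ht
        have : (0:ℝ) < 1 - (729/784)*(t*(1-t)^2) := by
          nlinarith [mul_nonneg (mul_nonneg (sq_nonneg (1-3*t)) ht0) (by nlinarith : (0:ℝ) ≤ 4 - 3*t)]
        linarith
  rw [intervalIntegral.integral_eq_sub_of_hasDerivAt hderiv hcont]
  -- evaluate
  have e1 : (8:ℝ)/(4*s) = 2*s/3 := by
    rw [div_eq_div_iff (by positivity) (by norm_num)]
    nlinarith
  have e2 : (1:ℝ)/(4*s) = s/12 := by
    rw [div_eq_div_iff (by positivity) (by norm_num)]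
    nlinarith
  have A1 : Real.arctan (2*s/3) + Real.arctan (s/12) = Real.arctan (9*s/10) := by
    rw [Real.arctan_add (by nlinarith)]
    congr 1
    rw [div_eq_div_iff (by nlinarith) (by norm_num)]
    nlinarith [sq_nonneg s]
  have A2 : Real.arctan (s/5) + Real.arctan (s/5) = Real.arctan (5*s/11) := by
    rw [Real.arctan_add (by nlinarith)]
    congr 1
    rw [div_eq_div_iff (by nlinarith) (by norm_num)]
    nlinarith
  have A3 : Real.arctan (5*s/11) + Real.arctan (s/5) = Real.arctan (9*s/10) := by
    rw [Real.arctan_add (by nlinarith)]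
    congr 1
    rw [div_eq_div_iff (by nlinarith) (by norm_num)]
    nlinarith
  have hlog112 : Real.log 112 = Real.log 16 + Real.log 7 := by
    rw [show (112:ℝ) = 16 * 7 by norm_num, Real.log_mul (by norm_num) (by norm_num)]
  have hlog49 : Real.log 49 = 2 * Real.log 7 := by
    rw [show (49:ℝ) = 7^2 by norm_num, Real.log_pow]; push_cast; ring
  have hlogdiv : Real.log (16/7) = Real.log 16 - Real.log 7 := by
    rw [Real.log_div (by norm_num) (by norm_num)]
  have T : Real.arctan (2*s/3) + Real.arctan (s/12) = 3 * Real.arctan (s/5) := by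
    rw [A1, ← A3, ← A2]; ring
  have e1' : Real.arctan (8/(4*s)) = Real.arctan (2*s/3) := by rw [e1]
  have e2' : Real.arctan (-1/(4*s)) = - Real.arctan (s/12) := by
    rw [show (-1:ℝ)/(4*s) = -(s/12) by rw [← e2]; ring, Real.arctan_neg]
  simp only [Faux]
  norm_num
  rw [← hsdef, e1', e2', hlog112, hlog49, hlogdiv]
  linear_combination (4*s/13) * T


open Real MeasureTheory intervalIntegral

theorem stmt_10 :
    ∑' k : ℕ, (729/784 : ℝ)^(k+1) / ((((k:ℝ)+1)) * (((3*(k+1)).choose (k+1) : ℕ) : ℝ)) =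
    (12*Real.sqrt 3/13)*Real.arctan (Real.sqrt 3/5) - (3/13)*Real.log (16/7) := by
  have hterm : ∀ k : ℕ, (729/784 : ℝ)^(k+1) / ((((k:ℝ)+1)) * (((3*(k+1)).choose (k+1) : ℕ) : ℝ))
      = ∫ t in Set.Ioc (0:ℝ) 1, (729/784:ℝ)^(k+1) * (t^k * (1-t)^(2*(k+1))) := by
    intro k
    have hb := beta_step (k+1) (by omega)
    rw [intervalIntegral.integral_of_le (by norm_num : (0:ℝ) ≤ 1)] at hb
    simp only [Nat.add_sub_cancel] at hb
    rw [MeasureTheory.integral_const_mul, hb]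
    push_cast
    ring
  rw [tsum_congr hterm]
  have hcont : ∀ k : ℕ, Continuous (fun t : ℝ => (729/784:ℝ)^(k+1) * (t^k * (1-t)^(2*(k+1)))) := by
    intro k; fun_prop
  have hint : ∀ k : ℕ, Integrable (fun t : ℝ => (729/784:ℝ)^(k+1) * (t^k * (1-t)^(2*(k+1))))
      (volume.restrict (Set.Ioc (0:ℝ) 1)) := fun k => (hcont k).integrableOn_Ioc
  have hbound : ∀ k : ℕ, ∀ t ∈ Set.Ioc (0:ℝ) 1,
      ‖(729/784:ℝ)^(k+1) * (t^k * (1-t)^(2*(k+1)))‖ ≤ (729/784:ℝ)^(k+1) := by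
    intro k t ht
    obtain ⟨ht0, ht1⟩ := ht
    have h1 : (0:ℝ) ≤ t^k * (1-t)^(2*(k+1)) :=
      mul_nonneg (pow_nonneg ht0.le k) (pow_nonneg (by linarith) _)
    have h2 : t^k * (1-t)^(2*(k+1)) ≤ 1 := by
      calc t^k * (1-t)^(2*(k+1)) ≤ 1 * 1 := by
            apply mul_le_mul _ _ (pow_nonneg (by linarith) _) (by norm_num)
            · exact pow_le_one₀ (le_of_lt ht0) ht1
            · exact pow_le_one₀ (by linarith) (by linarith)
      _ = 1 := by norm_num
    have hge : (0:ℝ) ≤ (729/784:ℝ)^(k+1) * (t^k * (1-t)^(2*(k+1))) :=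
      mul_nonneg (by positivity) h1
    rw [Real.norm_of_nonneg hge]
    calc (729/784:ℝ)^(k+1) * (t^k * (1-t)^(2*(k+1)))
        ≤ (729/784:ℝ)^(k+1) * 1 := mul_le_mul_of_nonneg_left h2 (by positivity)
      _ = (729/784:ℝ)^(k+1) := mul_one _
  have hsum : Summable (fun k : ℕ => ∫ t in Set.Ioc (0:ℝ) 1,
      ‖(729/784:ℝ)^(k+1) * (t^k * (1-t)^(2*(k+1)))‖) := by
    apply Summable.of_nonneg_of_le
      (fun k => integral_nonneg (fun t => norm_nonneg _))
      (fun k => ?_)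
      (((summable_geometric_of_lt_one (by norm_num) (by norm_num : (729/784:ℝ) < 1))).mul_left (729/784))
    calc (∫ t in Set.Ioc (0:ℝ) 1, ‖(729/784:ℝ)^(k+1) * (t^k * (1-t)^(2*(k+1)))‖)
        ≤ ∫ t in Set.Ioc (0:ℝ) 1, (729/784:ℝ)^(k+1) := by
          apply setIntegral_mono_on ((hint k).norm) (integrable_const _) measurableSet_Ioc
          exact hbound k
      _ = (729/784:ℝ)^(k+1) := by
          simp [Real.volume_Ioc]
      _ = 729/784 * (729/784:ℝ)^k := by rw [pow_succ]; ring
  rw [MeasureTheory.integral_tsum_of_summable_integral_norm hint hsum]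
  have hpt : ∀ t ∈ Set.Ioc (0:ℝ) 1,
      (∑' k : ℕ, (729/784:ℝ)^(k+1) * (t^k * (1-t)^(2*(k+1))))
      = (729/784)*(1-t)^2 * (1 - (729/784)*(t*(1-t)^2))⁻¹ := by
    intro t ht
    obtain ⟨ht0, ht1⟩ := ht
    have hre : ∀ k : ℕ, (729/784:ℝ)^(k+1) * (t^k * (1-t)^(2*(k+1)))
        = ((729/784)*(1-t)^2) * ((729/784)*(t*(1-t)^2))^k := by
      intro k; rw [mul_pow, mul_pow, ← pow_mul]; ring
    rw [tsum_congr hre, tsum_mul_left, tsum_geometric_of_lt_one (by positivity)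
      (by nlinarith [mul_nonneg (mul_nonneg (sq_nonneg (1-3*t)) (le_of_lt ht0)) (by nlinarith : (0:ℝ) ≤ 4 - 3*t)])]
  rw [MeasureTheory.setIntegral_congr_fun measurableSet_Ioc hpt,
    ← intervalIntegral.integral_of_le (by norm_num : (0:ℝ) ≤ 1)]
  exact ftc_step
end
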